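/- The entropy recurrence for quicksort, e(0) = 0 and e(n) = log₂(n) + (2/n)·∑_{i=0}^{n-1} e(i) for n > 0, is asymptotically linear: there exists a constant C such that e(n) ≤ C · n for all n. -/

import Mathlib

/-- Lower bound on the log-factorial sum: ∑_{i<n} ln i ≥ (n-1)·ln n − n. -/
lemma sum_log_lb : ∀ n : ℕ, 1 ≤ n →
    ((n : ℝ) - 1) * Real.log n - n ≤ ∑ i ∈ Finset.range n, Real.log i := by
  intro n hn
  induction n, hn using Nat.le_induction with
  | base => simp
  | succ n hn ih =>
    rw [Finset.sum_range_succ]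
    have hn0 : (0:ℝ) < n := by exact_mod_cast hn
    have hstep : Real.log ((n+1)/n) ≤ (n+1)/n - 1 :=
      Real.log_le_sub_one_of_pos (by positivity)
    have hlog : Real.log ((n:ℝ)+1) - Real.log n ≤ 1/n := by
      rw [show Real.log ((n:ℝ)+1) - Real.log n = Real.log (((n:ℝ)+1)/n) by
        rw [Real.log_div (by positivity) (ne_of_gt hn0)]]
      have : ((n:ℝ)+1)/n - 1 = 1/n := by field_simp; ring
      linarith [this ▸ hstep]
    have : ((n:ℝ)+1-1) * Real.log (n+1) - (n+1) ≤ ((n:ℝ)-1) * Real.log n - n + Real.log n := by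
      have h1 : (n:ℝ) * (Real.log ((n:ℝ)+1) - Real.log n) ≤ 1 := by
        calc (n:ℝ) * (Real.log ((n:ℝ)+1) - Real.log n) ≤ (n:ℝ) * (1/n) :=
              mul_le_mul_of_nonneg_left hlog (le_of_lt hn0)
          _ = 1 := by field_simp
      nlinarith
    push_cast
    linarith [this, ih]

/-- Algebraic core, without the log-base factor. -/
lemma core0 (n l : ℝ) (hn : 1 ≤ n) (hl : 0 ≤ l) (hln : l ≤ n - 1) :
    l + (2 / n) * (8 * (n * (n - 1) / 2) - 2 * ((n - 1) * l - n)) ≤ 8 * n - 2 * l := by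
  have hn0 : (0:ℝ) < n := by linarith
  have hnl : 0 ≤ n * l := mul_nonneg hn0.le hl
  rw [div_mul_eq_mul_div, ← sub_nonneg]
  have key : 0 ≤ (8 * n - 2 * l - (l + 2 * (8 * (n * (n - 1) / 2) - 2 * ((n - 1) * l - n)) / n)) * n := by
    have hexp : (8 * n - 2 * l - (l + 2 * (8 * (n * (n - 1) / 2) - 2 * ((n - 1) * l - n)) / n)) * n
        = 8 * n ^ 2 - 3 * l * n - (8 * n ^ 2 - 8 * n - 4 * (n - 1) * l + 4 * n) := by
      field_simp
      ring
    rw [hexp]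
    nlinarith
  nlinarith [key]

/-- The purely algebraic core inequality. -/
lemma core_ineq (n l L : ℝ) (hn : 1 ≤ n) (hl : 0 ≤ l) (hln : l ≤ n - 1) (hL : 0 < L) :
    l / L + (2 / n) * ((8/L) * (n * (n - 1) / 2) - (2 / L) * ((n - 1) * l - n))
      ≤ (8/L) * n - 2 * (l / L) := by
  have hn0 : (0:ℝ) < n := by linarith
  have h1 : l / L + (2 / n) * ((8/L) * (n * (n - 1) / 2) - (2 / L) * ((n - 1) * l - n))
      = (l + (2 / n) * (8 * (n * (n - 1) / 2) - 2 * ((n - 1) * l - n))) / L := by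
    field_simp
  have h2 : (8/L) * n - 2 * (l / L) = (8 * n - 2 * l) / L := by ring
  rw [h1, h2]
  exact (div_le_div_iff_of_pos_right hL).mpr (core0 n l hn hl hln)

/-- The entropy recurrence for quicksort, e(0) = 0 and
e(n) = log₂ n + (2/n)·∑_{i<n} e(i) for n > 0, is asymptotically linear:
there is a constant C with e(n) ≤ C · n for all n. -/
theorem quicksort_entropy_linear (e : ℕ → ℝ)
    (h0 : e 0 = 0)
    (hrec : ∀ n : ℕ, 0 < n →
      e n = Real.logb 2 n + (2 / n) * ∑ i ∈ Finset.range n, e i) :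
    ∃ C : ℝ, ∀ n : ℕ, e n ≤ C * n := by
  have hL : (0:ℝ) < Real.log 2 := Real.log_pos (by norm_num)
  set C : ℝ := 8 / Real.log 2 with hC
  have key : ∀ n : ℕ, e n ≤ C * n - 2 * Real.logb 2 n := by
    intro n
    induction n using Nat.strong_induction_on with
    | _ n ih =>
      rcases Nat.eq_zero_or_pos n with h | h
      · subst h
        simp [h0, Real.logb]
      · have hn1 : (1:ℝ) ≤ n := by exact_mod_cast h
        have hn0 : (0:ℝ) < n := by linarith
        -- sum bound
        have hsum : ∑ i ∈ Finset.range n, e i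
            ≤ C * ((n:ℝ) * ((n:ℝ) - 1) / 2)
              - (2 / Real.log 2) * (((n:ℝ) - 1) * Real.log n - n) := by
          have h1 : ∑ i ∈ Finset.range n, e i
              ≤ ∑ i ∈ Finset.range n, (C * i - 2 * Real.logb 2 i) := by
            apply Finset.sum_le_sum
            intro i hi
            exact ih i (Finset.mem_range.mp hi)
          have h2 : ∑ i ∈ Finset.range n, (C * (i:ℝ) - 2 * Real.logb 2 i)
              = C * (∑ i ∈ Finset.range n, (i:ℝ))
                - (2 / Real.log 2) * (∑ i ∈ Finset.range n, Real.log i) := by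
            rw [Finset.sum_sub_distrib, Finset.mul_sum, Finset.mul_sum]
            congr 1
            apply Finset.sum_congr rfl
            intro i _
            rw [Real.logb]
            ring
          have h3 : (∑ i ∈ Finset.range n, (i:ℝ)) = (n:ℝ) * ((n:ℝ) - 1) / 2 := by
            have := Finset.sum_range_id_mul_two n
            have hcast : ((∑ i ∈ Finset.range n, i : ℕ) : ℝ) * 2
                = (n:ℝ) * ((n:ℝ) - 1) := by
              rw [← Nat.cast_ofNat, ← Nat.cast_mul, this]
              push_cast [Nat.cast_sub h]
              ring
            push_cast at hcast ⊢
            linarith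
          have h4 := sum_log_lb n h
          have : (2 / Real.log 2) * (((n:ℝ) - 1) * Real.log n - n)
              ≤ (2 / Real.log 2) * (∑ i ∈ Finset.range n, Real.log i) :=
            mul_le_mul_of_nonneg_left h4 (by positivity)
          rw [h2, h3] at h1
          linarith
        rw [hrec n h]
        have h5 : Real.logb 2 n + (2 / (n:ℝ)) * ∑ i ∈ Finset.range n, e i
            ≤ Real.logb 2 n + (2 / (n:ℝ)) *
              (C * ((n:ℝ) * ((n:ℝ) - 1) / 2)
                - (2 / Real.log 2) * (((n:ℝ) - 1) * Real.log n - n)) := by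
          have : (0:ℝ) ≤ 2 / n := by positivity
          nlinarith [mul_le_mul_of_nonneg_left hsum this]
        have h6 := core_ineq (n:ℝ) (Real.log n) (Real.log 2) hn1
          (Real.log_nonneg hn1) (by linarith [Real.log_le_sub_one_of_pos hn0]) hL
        rw [Real.logb] at *
        calc Real.log n / Real.log 2 + (2 / (n:ℝ)) * ∑ i ∈ Finset.range n, e i
            ≤ Real.log n / Real.log 2 + (2 / (n:ℝ)) *
              (C * ((n:ℝ) * ((n:ℝ) - 1) / 2)
                - (2 / Real.log 2) * (((n:ℝ) - 1) * Real.log n - n)) := h5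
          _ ≤ C * n - 2 * (Real.log n / Real.log 2) := by rw [hC]; exact h6
  refine ⟨C, fun n => ?_⟩
  rcases Nat.eq_zero_or_pos n with h | h
  · subst h; simp [h0]
  · have hn1 : (1:ℝ) ≤ n := by exact_mod_cast h
    have hlb : 0 ≤ Real.logb 2 n := Real.logb_nonneg (by norm_num) hn1
    linarith [key n]
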